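/- An LDOI matrix X parametrized by (A,B,C) is unitary if and only if: (i) B is unitary; (ii) for all i < j there exists a phase ω_{ij} with |ω_{ij}| = 1 such that A_{ji} = ω_{ij}·conj(A_{ij}) and C_{ji} = −ω_{ij}·conj(C_{ij}); and (iii) |A_{ij}|² + |C_{ij}|² = 1 for all i < j. -/

import Mathlib

set_option maxRecDepth 10000


open Matrix

/-- The LDOI matrix `X^{(3)}_{(A,B,C)} = Σ_{i,j} A_{ij}|ij⟩⟨ij| + Σ_{i≠j} B_{ij}|ii⟩⟨jj|
  + Σ_{i≠j} C_{ij}|ij⟩⟨ji|`. -/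
def X3 {d : ℕ} {R : Type*} [CommRing R] (A B C : Matrix (Fin d) (Fin d) R) :
    Matrix (Fin d × Fin d) (Fin d × Fin d) R :=
  Matrix.of fun p q =>
    (if p.1 = q.1 ∧ p.2 = q.2 then A p.1 p.2 else 0) +
    (if p.1 = p.2 ∧ q.1 = q.2 ∧ p.1 ≠ q.1 then B p.1 q.1 else 0) +
    (if p.1 = q.2 ∧ p.2 = q.1 ∧ p.1 ≠ p.2 then C p.1 p.2 else 0)

/-- The realignment `(X^R)_{ij,kl} = X_{ik,jl}`. -/
def realign {d : ℕ} {R : Type*} [CommRing R]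
    (X : Matrix (Fin d × Fin d) (Fin d × Fin d) R) :
    Matrix (Fin d × Fin d) (Fin d × Fin d) R :=
  Matrix.of fun p q => X (p.1, q.1) (p.2, q.2)

/-- The partial transpose `(X^Γ)_{ij,kl} = X_{il,kj}`. -/
def ptrans {d : ℕ} {R : Type*} [CommRing R]
    (X : Matrix (Fin d × Fin d) (Fin d × Fin d) R) :
    Matrix (Fin d × Fin d) (Fin d × Fin d) R :=
  Matrix.of fun p q => X (p.1, q.2) (q.1, p.2)

/-- The triple (A,B,C) has equal diagonals. -/
def EqDiag {d : ℕ} {R : Type*} [CommRing R] (A B C : Matrix (Fin d) (Fin d) R) : Prop :=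
  ∀ i, A i i = B i i ∧ B i i = C i i

section Helpers

variable {d : ℕ} (A B C : Matrix (Fin d) (Fin d) ℂ)

lemma X3_row_off (i j : Fin d) (hij : i ≠ j) (r : Fin d × Fin d) :
    X3 A B C (i, j) r =
      (if r = (i, j) then A i j else 0) + (if r = (j, i) then C i j else 0) := by
  obtain ⟨k, l⟩ := r
  simp only [X3, Matrix.of_apply, Prod.mk.injEq]
  split_ifs <;> (try casesm* _ ∧ _) <;> subst_vars <;> first | tauto | rfl | assumption | ring

lemma X3_row_diag (h : EqDiag A B C) (i : Fin d) (r : Fin d × Fin d) :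
    X3 A B C (i, i) r = if r.1 = r.2 then B i r.1 else 0 := by
  obtain ⟨k, l⟩ := r
  simp only [X3, Matrix.of_apply]
  rcases eq_or_ne k l with rfl | hkl
  · rcases eq_or_ne i k with rfl | hik
    · simp [(h i).1]
    · simp [hik, Ne.symm hik]
  · have h1 : ¬ (i = k ∧ i = l) := fun hc => hkl (hc.1 ▸ hc.2 ▸ rfl)
    simp [hkl, h1]

lemma X3_col_off (k l : Fin d) (hkl : k ≠ l) (r : Fin d × Fin d) :
    X3 A B C r (k, l) =
      (if r = (k, l) then A k l else 0) + (if r = (l, k) then C l k else 0) := by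
  obtain ⟨i, j⟩ := r
  simp only [X3, Matrix.of_apply, Prod.mk.injEq]
  split_ifs <;> (try casesm* _ ∧ _) <;> subst_vars <;> first | tauto | rfl | assumption | ring

lemma X3_col_diag (h : EqDiag A B C) (k : Fin d) (r : Fin d × Fin d) :
    X3 A B C r (k, k) = if r.1 = r.2 then B r.1 k else 0 := by
  obtain ⟨i, j⟩ := r
  simp only [X3, Matrix.of_apply]
  rcases eq_or_ne i j with rfl | hij
  · rcases eq_or_ne i k with rfl | hik
    · simp [(h i).1]
    · simp [hik, Ne.symm hik]
  · have h1 : ¬ (i = k ∧ j = k) := fun hc => hij (hc.1 ▸ hc.2 ▸ rfl)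
    simp [hij, h1]

lemma X3_AA (i j : Fin d) : X3 A B C (i, j) (i, j) = A i j := by
  simp only [X3, Matrix.of_apply]
  split_ifs <;> (try casesm* _ ∧ _) <;> subst_vars <;> first | tauto | rfl | ring

lemma X3_CC (i j : Fin d) (hij : i ≠ j) : X3 A B C (i, j) (j, i) = C i j := by
  simp only [X3, Matrix.of_apply]
  split_ifs <;> (try casesm* _ ∧ _) <;> subst_vars <;> first | tauto | rfl | ring

lemma mulstar_diag_diag (h : EqDiag A B C) (i k : Fin d) :
    (X3 A B C * (X3 A B C)ᴴ) (i, i) (k, k) = (B * Bᴴ) i k := by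
  rw [Matrix.mul_apply, Matrix.mul_apply]
  rw [Fintype.sum_prod_type]
  simp only [conjTranspose_apply, X3_row_diag A B C h]
  simp [apply_ite (star : ℂ → ℂ), ite_mul, mul_ite, Finset.sum_ite_eq]

lemma mulstar_diag_off (h : EqDiag A B C) (i k l : Fin d) (hkl : k ≠ l) :
    (X3 A B C * (X3 A B C)ᴴ) (i, i) (k, l) = 0 := by
  rw [Matrix.mul_apply]
  simp only [conjTranspose_apply, X3_row_diag A B C h]
  apply Finset.sum_eq_zero
  intro r _
  rcases eq_or_ne r.1 r.2 with he | he
  · rw [X3_row_off A B C k l hkl]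
    have h1 : r ≠ (k, l) := by
      intro hc; rw [hc] at he; exact hkl he
    have h2 : r ≠ (l, k) := by
      intro hc; rw [hc] at he; exact hkl he.symm
    simp [h1, h2]
  · simp [he]

lemma mulstar_off (i j : Fin d) (hij : i ≠ j) (q : Fin d × Fin d) :
    (X3 A B C * (X3 A B C)ᴴ) (i, j) q
      = A i j * star (X3 A B C q (i, j)) + C i j * star (X3 A B C q (j, i)) := by
  rw [Matrix.mul_apply]
  simp only [conjTranspose_apply, X3_row_off A B C i j hij, add_mul, ite_mul, zero_mul]
  rw [Finset.sum_add_distrib]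
  simp [Finset.sum_ite_eq']

lemma starmul_off (i j : Fin d) (hij : i ≠ j) (p : Fin d × Fin d) :
    ((X3 A B C)ᴴ * X3 A B C) p (i, j)
      = star (X3 A B C (i, j) p) * A i j + star (X3 A B C (j, i) p) * C j i := by
  rw [Matrix.mul_apply]
  simp only [conjTranspose_apply, X3_col_off A B C i j hij, mul_add, mul_ite, mul_zero]
  rw [Finset.sum_add_distrib]
  simp [Finset.sum_ite_eq']

end Helpers

/-- unitarity characterization of LDOI matrices. -/
theorem stmt_5 {d : ℕ} (A B C : Matrix (Fin d) (Fin d) ℂ) (h : EqDiag A B C) :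
    X3 A B C ∈ Matrix.unitaryGroup (Fin d × Fin d) ℂ ↔
      (B ∈ Matrix.unitaryGroup (Fin d) ℂ ∧
       (∀ i j : Fin d, i < j → ∃ ω : ℂ, ‖ω‖ = 1 ∧
          A j i = ω * starRingEnd ℂ (A i j) ∧
          C j i = -(ω * starRingEnd ℂ (C i j))) ∧
       (∀ i j : Fin d, i < j →
          ‖A i j‖ ^ 2 + ‖C i j‖ ^ 2 = 1)) := by
  constructor
  · intro hu
    have E1 : X3 A B C * (X3 A B C)ᴴ = 1 := by
      rw [← Matrix.star_eq_conjTranspose]; exact Matrix.mem_unitaryGroup_iff.mp hu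
    have E2 : (X3 A B C)ᴴ * X3 A B C = 1 := by
      rw [← Matrix.star_eq_conjTranspose]; exact Matrix.mem_unitaryGroup_iff'.mp hu
    have key : ∀ i j : Fin d, i ≠ j →
        (A i j * starRingEnd ℂ (A i j) + C i j * starRingEnd ℂ (C i j) = 1) ∧
        (A i j * starRingEnd ℂ (C j i) + C i j * starRingEnd ℂ (A j i) = 0) ∧
        (starRingEnd ℂ (A i j) * A i j + starRingEnd ℂ (C j i) * C j i = 1) := by
      intro i j hij
      refine ⟨?_, ?_, ?_⟩
      · have t := congrFun (congrFun E1 (i, j)) (i, j)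
        rw [mulstar_off A B C i j hij, X3_AA, X3_CC A B C i j hij,
          Matrix.one_apply_eq] at t
        exact t
      · have t := congrFun (congrFun E1 (i, j)) (j, i)
        rw [mulstar_off A B C i j hij, X3_CC A B C j i hij.symm, X3_AA,
          Matrix.one_apply_ne (by simp [Prod.ext_iff]; intro hc; exact absurd hc hij)] at t
        exact t
      · have t := congrFun (congrFun E2 (i, j)) (i, j)
        rw [starmul_off A B C i j hij, X3_AA, X3_CC A B C j i hij.symm,
          Matrix.one_apply_eq] at t
        exact t
    refine ⟨?_, ?_, ?_⟩
    · rw [Matrix.mem_unitaryGroup_iff, Matrix.star_eq_conjTranspose]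
      ext i k
      have t := congrFun (congrFun E1 (i, i)) (k, k)
      rw [mulstar_diag_diag A B C h] at t
      rw [t]
      simp [Matrix.one_apply, Prod.ext_iff]
    · intro i j hlt
      have hij : i ≠ j := hlt.ne
      obtain ⟨e1, e2, e3⟩ := key i j hij
      obtain ⟨e4, -, -⟩ := key j i hij.symm
      have n1 : Complex.normSq (A i j) + Complex.normSq (C i j) = 1 := by
        rw [Complex.mul_conj, Complex.mul_conj] at e1
        exact_mod_cast e1
      have n3 : Complex.normSq (A i j) + Complex.normSq (C j i) = 1 := by
        rw [mul_comm (starRingEnd ℂ (A i j)), mul_comm (starRingEnd ℂ (C j i)),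
          Complex.mul_conj, Complex.mul_conj] at e3
        exact_mod_cast e3
      have n4 : Complex.normSq (A j i) + Complex.normSq (C j i) = 1 := by
        rw [Complex.mul_conj, Complex.mul_conj] at e4
        exact_mod_cast e4
      have hCC : Complex.normSq (C j i) = Complex.normSq (C i j) := by linarith
      have hAA : Complex.normSq (A j i) = Complex.normSq (A i j) := by linarith
      by_cases hA : A i j = 0
      · have hAji : A j i = 0 := by
          have h0 : Complex.normSq (A j i) = 0 := by rw [hAA, hA, map_zero]
          exact Complex.normSq_eq_zero.mp h0
        have hC0 : C i j ≠ 0 := by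
          intro hc
          rw [hA, hc] at n1
          simp at n1
        have hC0' : starRingEnd ℂ (C i j) ≠ 0 := by
          simpa using hC0
        refine ⟨-(C j i) / starRingEnd ℂ (C i j), ?_, ?_, ?_⟩
        · have habs : ‖C j i‖ = ‖C i j‖ := by
            rw [Complex.norm_def, Complex.norm_def, hCC]
          rw [norm_div, norm_neg, Complex.norm_conj, habs, div_self]
          exact norm_ne_zero_iff.mpr hC0
        · rw [hAji, hA, map_zero, mul_zero]
        · rw [div_mul_cancel₀ _ hC0', neg_neg]
      · have hA' : starRingEnd ℂ (A i j) ≠ 0 := by simpa using hA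
        refine ⟨A j i / starRingEnd ℂ (A i j), ?_, ?_, ?_⟩
        · have habs : ‖A j i‖ = ‖A i j‖ := by
            rw [Complex.norm_def, Complex.norm_def, hAA]
          rw [norm_div, Complex.norm_conj, habs, div_self]
          exact norm_ne_zero_iff.mpr hA
        · rw [div_mul_cancel₀ _ hA']
        · have e2' : starRingEnd ℂ (A i j) * C j i + starRingEnd ℂ (C i j) * A j i = 0 := by
            have := congrArg (starRingEnd ℂ) e2
            simpa [map_add, _root_.map_mul, Complex.conj_conj] using this
          field_simp
          linear_combination e2'
    · intro i j hlt
      have hij : i ≠ j := hlt.ne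
      obtain ⟨e1, -, -⟩ := key i j hij
      rw [Complex.mul_conj, Complex.mul_conj] at e1
      rw [Complex.sq_norm, Complex.sq_norm]
      exact_mod_cast e1
  · rintro ⟨hB, hω, hn⟩
    have key1 : ∀ i j : Fin d, i ≠ j →
        A i j * starRingEnd ℂ (A i j) + C i j * starRingEnd ℂ (C i j) = 1 := by
      have key0 : ∀ i j : Fin d, i < j →
          A i j * starRingEnd ℂ (A i j) + C i j * starRingEnd ℂ (C i j) = 1 := by
        intro i j hlt
        have := hn i j hlt
        rw [Complex.sq_norm, Complex.sq_norm] at this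
        rw [Complex.mul_conj, Complex.mul_conj]
        exact_mod_cast this
      intro i j hij
      rcases hij.lt_or_gt with hlt | hlt
      · exact key0 i j hlt
      · obtain ⟨ω, hw, hA, hC⟩ := hω j i hlt
        have hws : ω * starRingEnd ℂ ω = 1 := by
          rw [Complex.mul_conj]
          have : Complex.normSq ω = 1 := by rw [← Complex.sq_norm, hw]; norm_num
          rw [this]; norm_num
        have h1' := key0 j i hlt
        rw [hA, hC]
        simp only [_root_.map_mul, map_neg, Complex.conj_conj, neg_mul, mul_neg, neg_neg]
        linear_combination (ω * starRingEnd ℂ ω) * h1' + hws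
    have key2 : ∀ i j : Fin d, i ≠ j →
        A i j * starRingEnd ℂ (C j i) + C i j * starRingEnd ℂ (A j i) = 0 := by
      intro i j hij
      rcases hij.lt_or_gt with hlt | hlt
      · obtain ⟨ω, hw, hA, hC⟩ := hω i j hlt
        rw [hA, hC]
        simp only [_root_.map_mul, map_neg, Complex.conj_conj]
        ring
      · obtain ⟨ω, hw, hA, hC⟩ := hω j i hlt
        rw [hA, hC]
        ring
    rw [Matrix.mem_unitaryGroup_iff, Matrix.star_eq_conjTranspose]
    ext ⟨i, j⟩ ⟨k, l⟩
    rcases eq_or_ne i j with rfl | hij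
    · rcases eq_or_ne k l with rfl | hkl
      · rw [mulstar_diag_diag A B C h]
        have hB1 : B * Bᴴ = 1 := by
          rw [← Matrix.star_eq_conjTranspose]; exact Matrix.mem_unitaryGroup_iff.mp hB
        rw [hB1]
        simp [Matrix.one_apply, Prod.ext_iff]
      · rw [mulstar_diag_off A B C h i k l hkl]
        rw [Matrix.one_apply_ne]
        intro hc
        rw [Prod.mk.injEq] at hc
        exact hkl (by rw [← hc.1, hc.2])
    · rw [mulstar_off A B C i j hij]
      rcases eq_or_ne k l with rfl | hkl
      · rw [X3_row_diag A B C h k, X3_row_diag A B C h k]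
        simp only [if_neg hij, if_neg hij.symm, star_zero, mul_zero, add_zero]
        rw [Matrix.one_apply_ne]
        · intro hc
          rw [Prod.mk.injEq] at hc
          exact hij (by rw [hc.1, ← hc.2])
      · by_cases h1 : (k, l) = ((i, j) : Fin d × Fin d)
        · rw [Prod.mk.injEq] at h1
          obtain ⟨rfl, rfl⟩ := h1
          rw [X3_AA, X3_CC A B C k l hij, Matrix.one_apply_eq]
          simp only [Complex.star_def]
          exact key1 k l hij
        · by_cases h2 : (k, l) = ((j, i) : Fin d × Fin d)
          · rw [Prod.mk.injEq] at h2
            obtain ⟨rfl, rfl⟩ := h2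
            rw [X3_CC A B C k l hij.symm, X3_AA]
            rw [Matrix.one_apply_ne (by simp [Prod.ext_iff]; intro hc; exact absurd hc hij)]
            simp only [Complex.star_def]
            exact key2 l k hij
          · have f1 : ((i, j) : Fin d × Fin d) ≠ (k, l) := fun hc => h1 hc.symm
            have f2 : ((i, j) : Fin d × Fin d) ≠ (l, k) := by
              intro hc
              rw [Prod.mk.injEq] at hc
              exact h2 (by rw [Prod.mk.injEq]; exact ⟨hc.2.symm, hc.1.symm⟩)
            have f3 : ((j, i) : Fin d × Fin d) ≠ (k, l) := fun hc => h2 hc.symm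
            have f4 : ((j, i) : Fin d × Fin d) ≠ (l, k) := by
              intro hc
              rw [Prod.mk.injEq] at hc
              exact h1 (by rw [Prod.mk.injEq]; exact ⟨hc.2.symm, hc.1.symm⟩)
            rw [X3_row_off A B C k l hkl, X3_row_off A B C k l hkl,
              if_neg f1, if_neg f2, if_neg f3, if_neg f4,
              Matrix.one_apply_ne f1]
            simp
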